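/- arXiv:1502.07697 — 4 statements merged into one kernel-verified Lean document; each statement's English description precedes it below -/
import Mathlib

section
/- Let F be the set of 1-Lipschitz functions from [0,1] to [−B,B], γ ∈ (0,B) with 1/γ, 2B/γ integers, and M ≥ 1. Partition each I_a = [(a−1)γ, aγ) at every level m ∈ {1,…,M} into 2^m equal subintervals I_a^(m,n). Let F^(M) be the set of functions f_c(x) = Σ_a c_a⁰ 1{x∈I_a} + Σ_{m=1}^M Σ_a Σ_{n=1}^{2^m} c_a^(m,n) 1{x∈I_a^(m,n)} with c_a⁰ ∈ {−B+jγ : 0 ≤ j ≤ 2B/γ} and c_a^(m,n) ∈ [−γ/2^{m−1}, γ/2^{m−1}]. Then F^(M) is a (γ/2^{M+1})-net of (F, ‖·‖_∞). -/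
open Real Set Finset

/-- Dyadic refinement net for Lipschitz functions: every `1`-Lipschitz `f : [0,1] → [−B,B]`
is within sup-distance `γ/2^{M+1}` of a function of the form
`x ↦ c⁰_{a(x)} + Σ_{m=1}^M c^{(m)}_{n_m(x)}`, where `a(x) = ⌊x/γ⌋` indexes the level-0
interval of length `γ`, `n_m(x) = ⌊x 2^m/γ⌋` indexes the level-`m` dyadic subinterval of
length `γ/2^m`, the `c⁰` lie on the grid `{−B + jγ : 0 ≤ j ≤ 2B/γ}` and
`|c^{(m)}| ≤ γ/2^{m−1}`. -/
theorem lipschitz_dyadic_refinement_net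
    (B γ : ℝ) (hB : 0 < B) (hγ : γ ∈ Set.Ioo 0 B)
    (A J : ℕ) (hA : (A : ℝ) * γ = 1) (hJ : (J : ℝ) * γ = 2 * B)
    (M : ℕ) (hM : 1 ≤ M)
    (f : ℝ → ℝ) (hlip : LipschitzOnWith 1 f (Set.Icc 0 1))
    (hrange : ∀ x ∈ Set.Icc (0 : ℝ) 1, f x ∈ Set.Icc (-B) B) :
    ∃ (c0 : ℕ → ℝ) (c : ℕ → ℕ → ℝ),
      (∀ a : ℕ, ∃ j : ℕ, j ≤ J ∧ c0 a = -B + j * γ) ∧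
      (∀ m ∈ Finset.Icc 1 M, ∀ n : ℕ, |c m n| ≤ γ / 2 ^ (m - 1)) ∧
      ∀ x ∈ Set.Icc (0 : ℝ) 1,
        |f x - (c0 ⌊x / γ⌋₊ + ∑ m ∈ Finset.Icc 1 M, c m ⌊x * 2 ^ m / γ⌋₊)|
          ≤ γ / 2 ^ (M + 1) := by
  obtain ⟨hγ0, hγB⟩ := hγ
  -- the clamped function g
  set cl : ℝ → ℝ := fun x => max (min x 1) 0 with hcl_def
  have hcl_mem : ∀ x : ℝ, cl x ∈ Set.Icc (0:ℝ) 1 := fun x =>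
    ⟨le_max_right _ _, max_le (min_le_right _ _) zero_le_one⟩
  have hcl_lip : ∀ x y : ℝ, |cl x - cl y| ≤ |x - y| := by
    intro x y
    refine (abs_max_sub_max_le_abs _ _ _).trans ?_
    refine (abs_min_sub_min_le_max _ _ _ _).trans ?_
    simpa using le_refl |x - y|
  set g : ℝ → ℝ := fun x => f (cl x) with hg_def
  have hg_lip : ∀ x y : ℝ, |g x - g y| ≤ |x - y| := by
    intro x y
    have h2 : dist (f (cl x)) (f (cl y)) ≤ 1 * dist (cl x) (cl y) :=
      hlip.dist_le_mul _ (hcl_mem x) _ (hcl_mem y)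
    rw [one_mul] at h2
    calc |g x - g y| = dist (f (cl x)) (f (cl y)) := by rw [Real.dist_eq]
      _ ≤ dist (cl x) (cl y) := h2
      _ = |cl x - cl y| := Real.dist_eq _ _
      _ ≤ |x - y| := hcl_lip x y
  have hg_eq : ∀ x ∈ Set.Icc (0:ℝ) 1, g x = f x := by
    intro x hx
    have : cl x = x := by
      simp only [hcl_def]
      rw [min_eq_left hx.2, max_eq_left hx.1]
    simp [hg_def, this]
  have hg_range : ∀ x : ℝ, g x ∈ Set.Icc (-B) B := fun x => hrange _ (hcl_mem x)
  -- midpoints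
  set mid : ℕ → ℕ → ℝ := fun m n => ((n:ℝ) + 1/2) * (γ / 2 ^ m) with hmid_def
  -- level-0 coefficients
  set jf : ℕ → ℕ := fun a => ⌊(g (mid 0 a) + B) / γ + 1/2⌋₊ with hjf_def
  set c0 : ℕ → ℝ := fun a => -B + jf a * γ with hc0_def
  have hc0_close : ∀ a : ℕ, |c0 a - g (mid 0 a)| ≤ γ / 2 := by
    intro a
    set t : ℝ := (g (mid 0 a) + B) / γ with ht_def
    have ht0 : 0 ≤ t := by
      have := (hg_range (mid 0 a)).1
      apply div_nonneg _ hγ0.le; linarith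
    have h1 : (jf a : ℝ) ≤ t + 1/2 := Nat.floor_le (by linarith)
    have h2 : t + 1/2 < (jf a : ℝ) + 1 := Nat.lt_floor_add_one _
    have hge : g (mid 0 a) = -B + t * γ := by rw [ht_def, div_mul_cancel₀ _ hγ0.ne']; ring
    have : c0 a - g (mid 0 a) = ((jf a : ℝ) - t) * γ := by
      rw [hc0_def, hge]; ring
    rw [this, abs_mul, abs_of_pos hγ0]
    have : |(jf a : ℝ) - t| ≤ 1/2 := abs_le.2 ⟨by linarith, by linarith⟩
    nlinarith
  -- higher-level coefficients
  set c : ℕ → ℕ → ℝ := fun m n =>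
    g (mid m n) - (if m = 1 then c0 (n / 2) else g (mid (m - 1) (n / 2))) with hc_def
  -- midpoint distance to parent midpoint
  have hmid_dist : ∀ m : ℕ, 1 ≤ m → ∀ n : ℕ,
      |mid m n - mid (m - 1) (n / 2)| ≤ γ / 2 ^ (m + 1) := by
    intro m hm n
    obtain ⟨k, rfl⟩ := Nat.exists_eq_add_of_le hm
    obtain ⟨q, r, hr2, rfl⟩ : ∃ q r, r < 2 ∧ n = 2 * q + r :=
      ⟨n / 2, n % 2, by omega, by omega⟩
    have hq2 : (2 * q + r) / 2 = q := by omega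
    have hms : 1 + k - 1 = k := by omega
    have h2k : (2:ℝ) ^ (1 + k) = 2 * 2 ^ k := by rw [pow_add]; ring
    have hpos : (0:ℝ) < 2 ^ k := by positivity
    have hr : r = 0 ∨ r = 1 := by omega
    rcases hr with h | h
    · subst h
      have : mid (1 + k) (2 * q + 0) - mid (1 + k - 1) ((2 * q + 0) / 2)
          = -(γ / 2 ^ (1 + k + 1)) := by
        simp only [hmid_def, hms, hq2, h2k, pow_succ]
        push_cast
        field_simp
        ring
      rw [this, abs_neg, abs_of_nonneg (by positivity)]
    · subst h
      have : mid (1 + k) (2 * q + 1) - mid (1 + k - 1) ((2 * q + 1) / 2)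
          = γ / 2 ^ (1 + k + 1) := by
        simp only [hmid_def, hms, hq2, h2k, pow_succ]
        push_cast
        field_simp
        ring
      rw [this, abs_of_nonneg (by positivity)]
  refine ⟨c0, c, ?_, ?_, ?_⟩
  · -- grid membership
    intro a
    refine ⟨jf a, ?_, rfl⟩
    have hgB : g (mid 0 a) ≤ B := (hg_range (mid 0 a)).2
    have ht : (g (mid 0 a) + B) / γ + 1/2 < (J : ℝ) + 1 := by
      have h1 : (g (mid 0 a) + B) / γ ≤ (J : ℝ) := by
        rw [div_le_iff₀ hγ0]
        calc g (mid 0 a) + B ≤ 2 * B := by linarith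
          _ = (J:ℝ) * γ := hJ.symm
      linarith
    have h := Nat.floor_lt' (by omega : J + 1 ≠ 0) |>.2 (by exact_mod_cast ht)
    show ⌊(g (mid 0 a) + B) / γ + 1/2⌋₊ ≤ J
    omega
  · -- coefficient bounds
    intro m hm n
    simp only [Finset.mem_Icc] at hm
    have hm1 : 1 ≤ m := hm.1
    have hd := hmid_dist m hm1 n
    have hg2 := hg_lip (mid m n) (mid (m - 1) (n / 2))
    have hkey : |g (mid m n) - g (mid (m - 1) (n / 2))| ≤ γ / 2 ^ (m + 1) :=
      hg2.trans hd
    by_cases h1 : m = 1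
    · subst h1
      have hc0c := hc0_close (n / 2)
      have : c 1 n = (g (mid 1 n) - g (mid 0 (n / 2))) + (g (mid 0 (n/2)) - c0 (n / 2)) := by
        show g (mid 1 n) - (if (1:ℕ) = 1 then c0 (n / 2) else g (mid (1 - 1) (n / 2))) = _
        rw [if_pos rfl]; ring
      rw [this]
      calc |(g (mid 1 n) - g (mid 0 (n / 2))) + (g (mid 0 (n/2)) - c0 (n / 2))|
          ≤ |g (mid 1 n) - g (mid 0 (n / 2))| + |g (mid 0 (n/2)) - c0 (n / 2)| := abs_add_le _ _
        _ ≤ γ / 2 ^ 2 + γ / 2 := by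
            rw [abs_sub_comm (g (mid 0 (n/2)))]
            exact add_le_add hkey hc0c
        _ ≤ γ / 2 ^ (1 - 1) := by norm_num; linarith
    · have : c m n = g (mid m n) - g (mid (m - 1) (n / 2)) := by
        show g (mid m n) - (if m = 1 then c0 (n / 2) else g (mid (m - 1) (n / 2))) = _
        rw [if_neg h1]
      rw [this]
      refine hkey.trans ?_
      apply div_le_div_of_nonneg_left hγ0.le (by positivity)
      apply pow_le_pow_right₀ (by norm_num)
      omega
  · -- the sup-norm bound
    intro x hx
    have hx0 : 0 ≤ x := hx.1
    -- floor compatibility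
    have hfloor : ∀ m : ℕ, 1 ≤ m → ⌊x * 2 ^ m / γ⌋₊ / 2 = ⌊x * 2 ^ (m-1) / γ⌋₊ := by
      intro m hm
      have : x * 2 ^ (m-1) / γ = (x * 2 ^ m / γ) / (2:ℕ) := by
        obtain ⟨k, rfl⟩ := Nat.exists_eq_add_of_le hm
        have : 1 + k - 1 = k := by omega
        rw [this]
        push_cast
        rw [pow_add]
        field_simp
      rw [this, Nat.floor_div_natCast]
    have hfloor0 : ⌊x * 2 ^ 1 / γ⌋₊ / 2 = ⌊x / γ⌋₊ := by
      have := hfloor 1 le_rfl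
      simpa using this
    -- telescoping
    have htel : ∀ K : ℕ, 1 ≤ K →
        c0 ⌊x / γ⌋₊ + ∑ m ∈ Finset.Icc 1 K, c m ⌊x * 2 ^ m / γ⌋₊
          = g (mid K ⌊x * 2 ^ K / γ⌋₊) := by
      intro K hK
      induction K with
      | zero => omega
      | succ K ih =>
        by_cases hK1 : K = 0
        · subst hK1
          simp only [Finset.Icc_self, Finset.sum_singleton]
          have : c 1 ⌊x * 2 ^ 1 / γ⌋₊ =
              g (mid 1 ⌊x * 2 ^ 1 / γ⌋₊) - c0 ⌊x / γ⌋₊ := by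
            show g (mid 1 ⌊x * 2 ^ 1 / γ⌋₊) -
                (if (1:ℕ) = 1 then c0 (⌊x * 2 ^ 1 / γ⌋₊ / 2)
                 else g (mid (1 - 1) (⌊x * 2 ^ 1 / γ⌋₊ / 2))) = _
            rw [if_pos rfl, hfloor0]
          rw [this]; ring
        · have hK' : 1 ≤ K := by omega
          rw [Finset.sum_Icc_succ_top (by omega : 1 ≤ K + 1), ← add_assoc, ih hK']
          have hcs : c (K+1) ⌊x * 2 ^ (K+1) / γ⌋₊ =
              g (mid (K+1) ⌊x * 2 ^ (K+1) / γ⌋₊) - g (mid K ⌊x * 2 ^ K / γ⌋₊) := by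
            have h1 : K + 1 ≠ 1 := by omega
            have h2 := hfloor (K+1) (by omega)
            simp only [Nat.add_sub_cancel] at h2
            show g (mid (K+1) ⌊x * 2 ^ (K+1) / γ⌋₊) -
                (if K + 1 = 1 then c0 (⌊x * 2 ^ (K+1) / γ⌋₊ / 2)
                 else g (mid (K + 1 - 1) (⌊x * 2 ^ (K+1) / γ⌋₊ / 2))) = _
            rw [if_neg h1, Nat.add_sub_cancel, h2]
          rw [hcs]; ring
    rw [htel M hM, ← hg_eq x hx]
    -- final distance bound
    set n := ⌊x * 2 ^ M / γ⌋₊ with hn_def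
    have hy0 : 0 ≤ x * 2 ^ M / γ := by positivity
    have h2M : (0:ℝ) < 2 ^ M := by positivity
    have hl : (n : ℝ) ≤ x * 2 ^ M / γ := Nat.floor_le hy0
    have hu : x * 2 ^ M / γ < n + 1 := Nat.lt_floor_add_one _
    have hl' : (n : ℝ) * (γ / 2 ^ M) ≤ x := by
      calc (n:ℝ) * (γ / 2 ^ M) ≤ (x * 2 ^ M / γ) * (γ / 2 ^ M) := by
            apply mul_le_mul_of_nonneg_right hl (by positivity)
        _ = x := by field_simp
    have hu' : x < ((n:ℝ) + 1) * (γ / 2 ^ M) := by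
      have := mul_lt_mul_of_pos_right hu (by positivity : (0:ℝ) < γ / 2 ^ M)
      calc x = (x * 2 ^ M / γ) * (γ / 2 ^ M) := by field_simp
        _ < ((n:ℝ) + 1) * (γ / 2 ^ M) := this
    have hdist : |x - mid M n| ≤ γ / 2 ^ (M + 1) := by
      simp only [hmid_def]
      rw [abs_le]
      constructor
      · have : ((n:ℝ) + 1/2) * (γ / 2^M) - (1/2) * (γ / 2^M) ≤ x := by
          calc ((n:ℝ) + 1/2) * (γ / 2^M) - (1/2) * (γ / 2^M)
              = (n:ℝ) * (γ / 2^M) := by ring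
            _ ≤ x := hl'
        have heq : (1/2) * (γ / 2^M) = γ / 2 ^ (M+1) := by
          rw [pow_succ]; ring
        linarith [heq ▸ this]
      · have : x ≤ ((n:ℝ) + 1/2) * (γ / 2^M) + (1/2) * (γ / 2^M) := by
          calc x ≤ ((n:ℝ) + 1) * (γ / 2^M) := hu'.le
            _ = ((n:ℝ) + 1/2) * (γ / 2^M) + (1/2) * (γ / 2^M) := by ring
        have heq : (1/2) * (γ / 2^M) = γ / 2 ^ (M+1) := by
          rw [pow_succ]; ring
        linarith [heq ▸ this]
    exact (hg_lip x (mid M n)).trans hdist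
end

section
/- Let f: [0,1] → ℝ be q-times differentiable with each derivative f^(i) bounded by B in absolute value for 0 ≤ i ≤ q, and with f^(q) Hölder continuous of order α ∈ (0,1] with coefficient λ. Let I be an interval of length δ with center x₀, and suppose each f^(i)(x₀) is approximated by b_i with |f^(i)(x₀) − b_i| ≤ δ_y/2. Then the polynomial P(x) = Σ_{i=0}^q (b_i/i!)(x − x₀)^i satisfies |f(x) − P(x)| ≤ (e/2)δ_y + (λ/q!)(δ/2)^{q+α} for all x ∈ I. -/
open Real Set Finset

open scoped Nat

lemma iterEq (N : ℕ) (f : ℝ → ℝ) (hf : ContDiff ℝ N f) {s : Set ℝ} (hs : UniqueDiffOn ℝ s) :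
    ∀ n ≤ N, ∀ x ∈ s, iteratedDerivWithin n f s x = iteratedDeriv n f x := by
  intro n
  induction n with
  | zero => intro _ x _; simp
  | succ n ih =>
    intro hn x hx
    rw [iteratedDerivWithin_succ, iteratedDeriv_succ]
    have h1 : derivWithin (iteratedDerivWithin n f s) s x
        = derivWithin (iteratedDeriv n f) s x :=
      derivWithin_congr (fun y hy => ih (le_of_lt hn) y hy) (ih (le_of_lt hn) x hx)
    rw [h1]
    exact ((hf.differentiable_iteratedDeriv n (by exact_mod_cast hn)) x).derivWithin
      (hs x hx)

lemma taylor_succ (n : ℕ) (f : ℝ → ℝ) (hf : ContDiff ℝ (n + 1) f) {x₀ x : ℝ} (hx : x₀ < x) :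
    ∃ ξ ∈ Ioo x₀ x,
      f x - (∑ i ∈ Finset.range (n + 2), iteratedDeriv i f x₀ * (x - x₀) ^ i / i !)
        = (iteratedDeriv (n + 1) f ξ - iteratedDeriv (n + 1) f x₀) * (x - x₀) ^ (n + 1)
            / (n + 1)! := by
  have hs : UniqueDiffOn ℝ (Icc x₀ x) := uniqueDiffOn_Icc hx
  have hEq := iterEq (n + 1) f hf hs
  have hdiff : DifferentiableOn ℝ (iteratedDerivWithin n f (Icc x₀ x)) (Ioo x₀ x) := by
    have : Differentiable ℝ (iteratedDeriv n f) :=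
      hf.differentiable_iteratedDeriv n (by exact_mod_cast Nat.lt_succ_self n)
    exact this.differentiableOn.congr fun y hy =>
      hEq n (Nat.le_succ n) y (Ioo_subset_Icc_self hy)
  obtain ⟨ξ, hξ, hrem⟩ := taylor_mean_remainder_lagrange hx.ne
    (by rw [Set.uIcc_of_le hx.le]; exact (hf.of_le (by exact_mod_cast Nat.le_succ n)).contDiffOn)
    (by rw [Set.uIcc_of_le hx.le, Set.uIoo_of_le hx.le]; exact hdiff)
  rw [Set.uIoo_of_le hx.le] at hξ
  rw [Set.uIcc_of_le hx.le] at hrem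
  refine ⟨ξ, hξ, ?_⟩
  have hT : taylorWithinEval f n (Icc x₀ x) x₀ x
      = ∑ i ∈ Finset.range (n + 1), iteratedDeriv i f x₀ * (x - x₀) ^ i / i ! := by
    rw [taylor_within_apply]
    refine Finset.sum_congr rfl fun i hi => ?_
    rw [hEq i (by simp only [Finset.mem_range] at hi; omega) x₀ (left_mem_Icc.mpr hx.le), smul_eq_mul]
    ring
  have hξ' := hEq (n + 1) le_rfl ξ (Ioo_subset_Icc_self hξ)
  rw [hT, hξ'] at hrem
  rw [Finset.sum_range_succ]
  have : f x - (∑ i ∈ Finset.range (n + 1), iteratedDeriv i f x₀ * (x - x₀) ^ i / i !)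
      = iteratedDeriv (n + 1) f ξ * (x - x₀) ^ (n + 1) / (n + 1)! := hrem
  rw [show f x - ((∑ i ∈ Finset.range (n + 1), iteratedDeriv i f x₀ * (x - x₀) ^ i / i !)
      + iteratedDeriv (n + 1) f x₀ * (x - x₀) ^ (n + 1) / (n + 1)!)
      = (f x - (∑ i ∈ Finset.range (n + 1), iteratedDeriv i f x₀ * (x - x₀) ^ i / i !))
      - iteratedDeriv (n + 1) f x₀ * (x - x₀) ^ (n + 1) / (n + 1)! by ring, this]
  ring

lemma taylor_two_sided (n : ℕ) (f : ℝ → ℝ) (hf : ContDiff ℝ (n + 1) f) {x₀ x : ℝ}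
    (hx : x < x₀) :
    ∃ ξ ∈ Ioo x x₀,
      f x - (∑ i ∈ Finset.range (n + 2), iteratedDeriv i f x₀ * (x - x₀) ^ i / i !)
        = (iteratedDeriv (n + 1) f ξ - iteratedDeriv (n + 1) f x₀) * (x - x₀) ^ (n + 1)
            / (n + 1)! := by
  have hgc : ContDiff ℝ (n + 1) (fun t => f (-t)) := hf.comp contDiff_neg
  obtain ⟨ξ', hξ', hrem⟩ := taylor_succ n (fun t => f (-t)) hgc (show -x₀ < -x by linarith)
  refine ⟨-ξ', ⟨by linarith [hξ'.2], by linarith [hξ'.1]⟩, ?_⟩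
  have key : ∀ (i : ℕ) (t : ℝ), iteratedDeriv i (fun t => f (-t)) t
      = (-1 : ℝ) ^ i * iteratedDeriv i f (-t) := by
    intro i t
    rw [iteratedDeriv_comp_neg i f t, smul_eq_mul]
  simp only [key, neg_neg] at hrem
  have hsum : ∀ i : ℕ, (-1 : ℝ) ^ i * iteratedDeriv i f x₀ * (-x - -x₀) ^ i / i !
      = iteratedDeriv i f x₀ * (x - x₀) ^ i / i ! := by
    intro i
    have : ((-1 : ℝ)) ^ i * (-x - -x₀) ^ i = (x - x₀) ^ i := by
      rw [← mul_pow]; ring_nf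
    field_simp
    linear_combination (iteratedDeriv i f x₀) * this
  simp only [hsum] at hrem
  rw [hrem]
  have hpow : ((-1 : ℝ)) ^ (n + 1) * (-x - -x₀) ^ (n + 1) = (x - x₀) ^ (n + 1) := by
    rw [← mul_pow]; ring_nf
  congr 1
  calc ((-1 : ℝ) ^ (n + 1) * iteratedDeriv (n + 1) f (-ξ')
        - (-1) ^ (n + 1) * iteratedDeriv (n + 1) f x₀) * (-x - -x₀) ^ (n + 1)
      = (iteratedDeriv (n + 1) f (-ξ') - iteratedDeriv (n + 1) f x₀)
        * ((-1) ^ (n + 1) * (-x - -x₀) ^ (n + 1)) := by ring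
    _ = _ := by rw [hpow]

/-- Piecewise-polynomial approximation of a Hölder-smooth function. If `f` is `q`-times
continuously differentiable with `|f⁽ⁱ⁾| ≤ B` on `[0,1]`, `f⁽q⁾` is `α`-Hölder with
coefficient `lam`, `I = [x₀ − δ/2, x₀ + δ/2] ⊆ [0,1]`, and `b i` approximates
`f⁽ⁱ⁾(x₀)` up to `δy/2`, then the polynomial `P(x) = Σ_{i≤q} (b i / i!) (x − x₀)^i`
satisfies `|f(x) − P(x)| ≤ (e/2) δy + (lam/q!) (δ/2)^{q+α}` on `I`. -/
theorem taylor_grid_polynomial_approx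
    (q : ℕ) (α B lam δ δy : ℝ) (hα : α ∈ Set.Ioc (0 : ℝ) 1)
    (hB : 0 < B) (hlam : 0 < lam) (hδ : 0 < δ) (hδy : 0 < δy)
    (f : ℝ → ℝ) (hf : ContDiff ℝ q f)
    (hbound : ∀ i ≤ q, ∀ x ∈ Set.Icc (0 : ℝ) 1, |iteratedDeriv i f x| ≤ B)
    (hholder : ∀ x ∈ Set.Icc (0 : ℝ) 1, ∀ y ∈ Set.Icc (0 : ℝ) 1,
      |iteratedDeriv q f x - iteratedDeriv q f y| ≤ lam * |x - y| ^ α)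
    (x₀ : ℝ) (hI : Set.Icc (x₀ - δ / 2) (x₀ + δ / 2) ⊆ Set.Icc (0 : ℝ) 1)
    (b : ℕ → ℝ) (hb : ∀ i ≤ q, |iteratedDeriv i f x₀ - b i| ≤ δy / 2) :
    ∀ x ∈ Set.Icc (x₀ - δ / 2) (x₀ + δ / 2),
      |f x - ∑ i ∈ Finset.range (q + 1), b i / (Nat.factorial i) * (x - x₀) ^ i|
        ≤ (Real.exp 1 / 2) * δy + (lam / Nat.factorial q) * (δ / 2) ^ ((q : ℝ) + α) := by
  obtain ⟨hα0, hα1⟩ := hα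
  intro x hx
  have hx01 : x ∈ Set.Icc (0 : ℝ) 1 := hI hx
  have hx₀mem : x₀ ∈ Set.Icc (x₀ - δ / 2) (x₀ + δ / 2) := ⟨by linarith, by linarith⟩
  have hx₀01 : x₀ ∈ Set.Icc (0 : ℝ) 1 := hI hx₀mem
  have hl := hI (Set.left_mem_Icc.mpr (by linarith : x₀ - δ / 2 ≤ x₀ + δ / 2))
  have hr := hI (Set.right_mem_Icc.mpr (by linarith : x₀ - δ / 2 ≤ x₀ + δ / 2))
  have hδ1 : δ ≤ 1 := by
    have h1 := hl.1; have h2 := hr.2; linarith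
  have hxd : |x - x₀| ≤ δ / 2 := abs_le.mpr ⟨by linarith [hx.1], by linarith [hx.2]⟩
  have habs1 : |x - x₀| ≤ 1 := hxd.trans (by linarith)
  set T := ∑ i ∈ Finset.range (q + 1), iteratedDeriv i f x₀ * (x - x₀) ^ i / i ! with hT
  set P := ∑ i ∈ Finset.range (q + 1), b i / (Nat.factorial i : ℝ) * (x - x₀) ^ i with hP
  have hTP : |T - P| ≤ Real.exp 1 / 2 * δy := by
    have hTPe : T - P
        = ∑ i ∈ Finset.range (q + 1), (iteratedDeriv i f x₀ - b i) * (x - x₀) ^ i / i ! := by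
      rw [hT, hP, ← Finset.sum_sub_distrib]
      exact Finset.sum_congr rfl fun i _ => by ring
    rw [hTPe]
    calc |∑ i ∈ Finset.range (q + 1), (iteratedDeriv i f x₀ - b i) * (x - x₀) ^ i / i !|
        ≤ ∑ i ∈ Finset.range (q + 1), |(iteratedDeriv i f x₀ - b i) * (x - x₀) ^ i / i !| :=
          Finset.abs_sum_le_sum_abs _ _
      _ ≤ ∑ i ∈ Finset.range (q + 1), δy / 2 * (|x - x₀| ^ i / i !) := by
          refine Finset.sum_le_sum fun i hi => ?_
          rw [abs_div, abs_mul, abs_pow, Nat.abs_cast, mul_div_assoc]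
          have h1 : |iteratedDeriv i f x₀ - b i| ≤ δy / 2 :=
            hb i (by simp only [Finset.mem_range] at hi; omega)
          exact mul_le_mul_of_nonneg_right h1 (by positivity)
      _ = δy / 2 * ∑ i ∈ Finset.range (q + 1), |x - x₀| ^ i / i ! := by
          rw [Finset.mul_sum]
      _ ≤ δy / 2 * Real.exp 1 := by
          refine mul_le_mul_of_nonneg_left ?_ (by linarith)
          exact (Real.sum_le_exp_of_nonneg (abs_nonneg _) _).trans
            (Real.exp_le_exp.mpr habs1)
      _ = Real.exp 1 / 2 * δy := by ring
  have hfT : |f x - T| ≤ lam / (Nat.factorial q) * (δ / 2) ^ ((q : ℝ) + α) := by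
    suffices h : |f x - T| ≤ lam / (Nat.factorial q) * |x - x₀| ^ ((q : ℝ) + α) by
      refine h.trans (mul_le_mul_of_nonneg_left ?_ (by positivity))
      exact Real.rpow_le_rpow (abs_nonneg _) hxd (by positivity)
    rcases eq_or_ne x x₀ with rfl | hne
    · have hT0 : T = f x := by
        rw [hT, Finset.sum_eq_single 0]
        · simp
        · intro i _ h0; simp [zero_pow h0]
        · intro h; exact absurd (Finset.mem_range.mpr (by omega)) h
      rw [hT0, sub_self, abs_zero]
      positivity
    have hxx : (0 : ℝ) < |x - x₀| := abs_pos.mpr (sub_ne_zero.mpr hne)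
    have hsplit : |x - x₀| ^ ((q : ℝ) + α) = |x - x₀| ^ q * |x - x₀| ^ α := by
      rw [Real.rpow_add hxx, Real.rpow_natCast]
    cases q with
    | zero =>
      have hT0 : T = f x₀ := by simp [hT]
      rw [hT0]
      have := hholder x hx01 x₀ hx₀01
      simpa [Nat.factorial] using this
    | succ n =>
      have hf' : ContDiff ℝ ((n : ℕ∞) + 1) f := by exact_mod_cast hf
      have hkey : ∃ ξ, (ξ ∈ Set.Icc (0:ℝ) 1 ∧ |ξ - x₀| ≤ |x - x₀|) ∧
          f x - T = (iteratedDeriv (n + 1) f ξ - iteratedDeriv (n + 1) f x₀)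
            * (x - x₀) ^ (n + 1) / (n + 1)! := by
        rcases lt_or_gt_of_ne hne with hlt | hgt
        · obtain ⟨ξ, hξ, heq⟩ := taylor_two_sided n f hf' hlt
          exact ⟨ξ, ⟨⟨by linarith [hξ.1, hx01.1], by linarith [hξ.2, hx₀01.2]⟩,
            by rw [abs_sub_comm ξ x₀, abs_sub_comm x x₀,
              abs_of_pos (by linarith [hξ.2] : (0:ℝ) < x₀ - ξ),
              abs_of_pos (by linarith : (0:ℝ) < x₀ - x)]; linarith [hξ.1]⟩, heq⟩
        · obtain ⟨ξ, hξ, heq⟩ := taylor_succ n f hf' hgt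
          exact ⟨ξ, ⟨⟨by linarith [hξ.1, hx₀01.1], by linarith [hξ.2, hx01.2]⟩,
            by rw [abs_of_pos (by linarith [hξ.1] : (0:ℝ) < ξ - x₀),
              abs_of_pos (by linarith : (0:ℝ) < x - x₀)]; linarith [hξ.2]⟩, heq⟩
      obtain ⟨ξ, ⟨hξ01, hξd⟩, heq⟩ := hkey
      rw [heq, abs_div, abs_mul, abs_pow, Nat.abs_cast]
      have hh := hholder ξ hξ01 x₀ hx₀01
      have hrp : |ξ - x₀| ^ α ≤ |x - x₀| ^ α :=
        Real.rpow_le_rpow (abs_nonneg _) hξd hα0.le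
      calc |iteratedDeriv (n + 1) f ξ - iteratedDeriv (n + 1) f x₀| * |x - x₀| ^ (n + 1)
            / ((n + 1)! : ℝ)
          ≤ lam * |x - x₀| ^ α * |x - x₀| ^ (n + 1) / ((n + 1)! : ℝ) := by
            gcongr
            exact hh.trans (mul_le_mul_of_nonneg_left hrp hlam.le)
        _ = lam / ((n + 1)! : ℝ) * |x - x₀| ^ (((n + 1 : ℕ) : ℝ) + α) := by
            rw [hsplit]; ring
  calc |f x - P| = |(f x - T) + (T - P)| := by ring_nf
    _ ≤ |f x - T| + |T - P| := abs_add_le _ _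
    _ ≤ lam / (Nat.factorial q) * (δ / 2) ^ ((q : ℝ) + α) + Real.exp 1 / 2 * δy :=
        add_le_add hfT hTP
    _ = Real.exp 1 / 2 * δy + lam / (Nat.factorial q) * (δ / 2) ^ ((q : ℝ) + α) := by ring
end

section
/- Let β = q + α with q ∈ ℕ and α ∈ (0,1], β ≥ 1/2, and let F be the class of functions f: [0,1] → ℝ with ‖f^(i)‖_∞ ≤ B for 0 ≤ i ≤ q and f^(q) α-Hölder with coefficient λ. Set δ_x = 2(q!γ/(2λ))^{1/β} and δ_y = γ/e. Then the set F^(0) of piecewise-clipped-polynomials (degree ≤ q, coefficients in the grid {−B + jδ_y : 0 ≤ j ≤ 2B/δ_y}, clipped to [−B,B], constant pieces on the intervals I_a of length δ_x) is a γ-net of (F, ‖·‖_∞). -/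
open Real Set Finset


lemma bnd_right (F F' : ℝ → ℝ) (C p : ℝ) (hp : 0 ≤ p) (hC : 0 ≤ C) (c x : ℝ) (hcx : c ≤ x)
    (hF : ∀ t ∈ Set.Icc c x, HasDerivAt F (F' t) t)
    (hF' : ∀ t ∈ Set.Icc c x, |F' t| ≤ C * (t - c) ^ p) :
    |F x - F c| ≤ C * (x - c) ^ (p + 1) / (p + 1) := by
  have hp1 : (0:ℝ) < p + 1 := by linarith
  have key := image_norm_le_of_norm_deriv_right_le_deriv_boundary
    (f := fun t => F t - F c) (f' := F') (a := c) (b := x)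
    (B := fun t => C * (t - c) ^ (p + 1) / (p + 1)) (B' := fun t => C * (t - c) ^ p)
    (fun t ht => ((hF t ht).sub_const (F c)).continuousAt.continuousWithinAt)
    (fun t ht => ((hF t (Set.mem_Icc.2 ⟨ht.1, ht.2.le⟩)).sub_const (F c)).hasDerivWithinAt)
    (by simp [Real.zero_rpow hp1.ne'])
    (fun t => by
      have h := (Real.hasDerivAt_rpow_const (x := t - c) (p := p + 1) (Or.inr (by linarith)))
      have h2 := ((h.comp t ((hasDerivAt_id t).sub_const c)).const_mul C).div_const (p + 1)
      refine h2.congr_deriv ?_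
      simp only [add_sub_cancel_right]
      field_simp)
    (fun t ht => by
      have := hF' t (Set.mem_Icc.2 ⟨ht.1, ht.2.le⟩)
      simpa using this)
  have := key (Set.right_mem_Icc.2 hcx)
  simpa using this

lemma bnd2 (F F' : ℝ → ℝ) (C p : ℝ) (hp : 0 ≤ p) (hC : 0 ≤ C) (c x : ℝ)
    (hF : ∀ t ∈ Set.uIcc c x, HasDerivAt F (F' t) t)
    (hF' : ∀ t ∈ Set.uIcc c x, |F' t| ≤ C * |t - c| ^ p) :
    |F x - F c| ≤ C * |x - c| ^ (p + 1) / (p + 1) := by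
  rcases le_total c x with h | h
  · rw [Set.uIcc_of_le h] at hF hF'
    rw [abs_of_nonneg (by linarith : (0:ℝ) ≤ x - c)]
    refine bnd_right F F' C p hp hC c x h hF (fun t ht => ?_)
    rw [← abs_of_nonneg (by linarith [ht.1] : (0:ℝ) ≤ t - c)]
    exact hF' t ht
  · rw [Set.uIcc_of_ge h] at hF hF'
    have key := bnd_right (fun t => F (2*c - t)) (fun t => F' (2*c - t) * (-1)) C p hp hC c (2*c - x)
      (by linarith)
      (fun t ht => by
        refine HasDerivAt.comp t (hF (2*c - t) ?_) ((hasDerivAt_id t).const_sub (2*c))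
        constructor <;> [linarith [ht.2]; linarith [ht.1]])
      (fun t ht => by
        rw [abs_mul, abs_neg, abs_one, mul_one]
        have := hF' (2*c - t) ⟨by linarith [ht.2], by linarith [ht.1]⟩
        have h2 : |2*c - t - c| = |t - c| := by rw [abs_sub_comm]; ring_nf
        rw [h2] at this
        rw [← abs_of_nonneg (by linarith [ht.1] : (0:ℝ) ≤ t - c)]
        exact this)
    have e1 : (2*c - (2*c - x)) = x := by ring
    simp only [e1] at key
    have e2 : (2*c - c) = c := by ring
    simp only [e2] at key
    have e3 : (2*c - x - c) = c - x := by ring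
    rw [e3] at key
    rwa [abs_of_nonpos (by linarith : x - c ≤ 0), neg_sub]

lemma taylor_holder (α lam : ℝ) (hα : 0 < α) (hlam : 0 ≤ lam) :
    ∀ (q : ℕ) (f : ℝ → ℝ), ContDiff ℝ q f → ∀ c x : ℝ,
    (∀ t ∈ Set.uIcc c x, |iteratedDeriv q f t - iteratedDeriv q f c| ≤ lam * |t - c| ^ α) →
    |f x - ∑ i ∈ Finset.range (q + 1), iteratedDeriv i f c * (x - c) ^ i / (Nat.factorial i)|
      ≤ lam * |x - c| ^ ((q : ℝ) + α) / (Nat.factorial q) := by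
  intro q
  induction q with
  | zero =>
    intro f hf c x hH
    have := hH x (Set.right_mem_uIcc)
    simpa [iteratedDeriv_zero] using this
  | succ q ih =>
    intro f hf c x hH
    have hdiff : Differentiable ℝ f := hf.differentiable (by simp)
    have hfcast : ContDiff ℝ ((q : ℕ∞) + 1) f := by exact_mod_cast hf
    have hf' : ContDiff ℝ q (deriv f) := (contDiff_succ_iff_deriv.mp hfcast).2.2
    set g := deriv f with hg
    -- the remainder function
    set F : ℝ → ℝ := fun t =>
      f t - ∑ i ∈ Finset.range (q + 2), iteratedDeriv i f c * (t - c) ^ i / (Nat.factorial i) with hF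
    set F' : ℝ → ℝ := fun t =>
      g t - ∑ j ∈ Finset.range (q + 1), iteratedDeriv j g c * (t - c) ^ j / (Nat.factorial j) with hF'
    have hderiv : ∀ t, HasDerivAt F (F' t) t := by
      intro t
      have h1 : HasDerivAt f (g t) t := (hdiff t).hasDerivAt
      have h2 : HasDerivAt (fun t => ∑ i ∈ Finset.range (q + 2),
          iteratedDeriv i f c * (t - c) ^ i / (Nat.factorial i))
          (∑ i ∈ Finset.range (q + 2),
            iteratedDeriv i f c * ((i : ℝ) * (t - c) ^ (i - 1) * 1) / (Nat.factorial i)) t := by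
        apply HasDerivAt.fun_sum
        intro i _
        exact ((((hasDerivAt_id t).sub_const c).pow i).const_mul (iteratedDeriv i f c)).div_const _
      have h3 : (∑ i ∈ Finset.range (q + 2),
            iteratedDeriv i f c * ((i : ℝ) * (t - c) ^ (i - 1) * 1) / (Nat.factorial i))
          = ∑ j ∈ Finset.range (q + 1), iteratedDeriv j g c * (t - c) ^ j / (Nat.factorial j) := by
        rw [Finset.sum_range_succ']
        simp only [Nat.cast_zero, zero_mul, mul_zero, zero_div, add_zero, mul_one, Nat.add_sub_cancel]
        refine Finset.sum_congr rfl (fun j _ => ?_)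
        rw [← iteratedDeriv_succ' , Nat.factorial_succ]
        push_cast
        have hj : (Nat.factorial j : ℝ) ≠ 0 := by exact_mod_cast (Nat.factorial_pos j).ne'
        field_simp
      have := h1.sub (h3 ▸ h2)
      exact this
    have hbound : ∀ t ∈ Set.uIcc c x, |F' t| ≤ (lam / Nat.factorial q) * |t - c| ^ ((q : ℝ) + α) := by
      intro t ht
      have hsub : Set.uIcc c t ⊆ Set.uIcc c x := Set.uIcc_subset_uIcc Set.left_mem_uIcc ht
      have hH' : ∀ s ∈ Set.uIcc c t, |iteratedDeriv q g s - iteratedDeriv q g c| ≤ lam * |s - c| ^ α := by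
        intro s hs
        rw [hg, ← iteratedDeriv_succ']
        exact hH s (hsub hs)
      have := ih g hf' c t hH'
      rw [hF']
      calc |g t - ∑ j ∈ Finset.range (q + 1), iteratedDeriv j g c * (t - c) ^ j / (Nat.factorial j)|
          ≤ lam * |t - c| ^ ((q : ℝ) + α) / (Nat.factorial q) := this
        _ = (lam / Nat.factorial q) * |t - c| ^ ((q : ℝ) + α) := by ring
    have key := bnd2 F F' (lam / Nat.factorial q) ((q : ℝ) + α)
      (by positivity) (by positivity) c x (fun t _ => hderiv t) hbound
    have hFc : F c = 0 := by
      rw [hF]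
      simp only [sub_self]
      rw [Finset.sum_eq_single 0]
      · simp
      · intro i _ hi
        simp [zero_pow hi]
      · simp
    rw [hFc, sub_zero] at key
    have hgoal : F x = f x - ∑ i ∈ Finset.range (q + 1 + 1),
        iteratedDeriv i f c * (x - c) ^ i / (Nat.factorial i) := rfl
    rw [← hgoal]
    refine key.trans ?_
    have hfac : (Nat.factorial (q + 1) : ℝ) = (q + 1) * Nat.factorial q := by
      rw [Nat.factorial_succ]; push_cast; ring
    have hexp : (q : ℝ) + α + 1 = ((q : ℕ) + 1 : ℕ) + α := by push_cast; ring
    rw [hexp, hfac]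
    rw [div_mul_eq_mul_div, div_div]
    rw [div_le_div_iff₀ (by positivity) (by positivity)]
    have hpow : (0:ℝ) ≤ |x - c| ^ (((q : ℕ) + 1 : ℕ) + α) := Real.rpow_nonneg (abs_nonneg _) _
    have hq : (0:ℝ) < Nat.factorial q := by positivity
    nlinarith [mul_nonneg hlam hpow, mul_nonneg (mul_nonneg hlam hpow) hq.le]

lemma grid_round (B δy : ℝ) (J : ℕ) (hδy : 0 < δy) (hJ : (J : ℝ) * δy = 2 * B)
    (v : ℝ) (hv1 : -B ≤ v) (hv2 : v ≤ B) :
    ∃ j : ℕ, j ≤ J ∧ |(-B + (j : ℝ) * δy) - v| ≤ δy / 2 := by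
  set r := (v + B) / δy with hr
  have hrδ : r * δy = v + B := div_mul_cancel₀ _ hδy.ne'
  have hr0 : 0 ≤ r := div_nonneg (by linarith) hδy.le
  have hrJ : r ≤ J := by
    rw [hr, div_le_iff₀ hδy]; linarith
  refine ⟨⌊r + 1/2⌋₊, ?_, ?_⟩
  · have h1 : (⌊r + 1/2⌋₊ : ℝ) ≤ r + 1/2 := Nat.floor_le (by linarith)
    have : (⌊r + 1/2⌋₊ : ℝ) < (J : ℝ) + 1 := by linarith
    exact_mod_cast Nat.lt_add_one_iff.mp (by exact_mod_cast this)
  · have h1 : (⌊r + 1/2⌋₊ : ℝ) ≤ r + 1/2 := Nat.floor_le (by linarith)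
    have h2 : r + 1/2 < (⌊r + 1/2⌋₊ : ℝ) + 1 := Nat.lt_floor_add_one _
    have he : (-B + (⌊r + 1/2⌋₊ : ℝ) * δy) - v = ((⌊r + 1/2⌋₊ : ℝ) - r) * δy := by
      rw [sub_mul, hrδ]; ring
    rw [he, abs_le]
    constructor <;> nlinarith

lemma clip_abs (u v B : ℝ) (hu1 : -B ≤ u) (hu2 : u ≤ B) :
    |u - max (-B) (min B v)| ≤ |u - v| := by
  have hB : (0:ℝ) ≤ B := by linarith
  rcases le_total v (-B) with h | h
  · rw [min_eq_right (by linarith), max_eq_left h]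
    rw [abs_of_nonneg (by linarith), abs_of_nonneg (by linarith)]
    linarith
  · rcases le_total B v with h2 | h2
    · rw [min_eq_left h2, max_eq_right (by linarith)]
      rw [abs_of_nonpos (by linarith), abs_of_nonpos (by linarith)]
      linarith
    · rw [min_eq_right h2, max_eq_right h]

set_option maxHeartbeats 1000000 in
/-- Piecewise clipped polynomials form a `γ`-net of a Hölder class. Let `β = q + α ≥ 1/2`,
`δx = 2 (q! γ / (2 lam))^{1/β}`, `δy = γ/e`. For every `f : [0,1] → ℝ` with all derivatives
up to order `q` bounded by `B` and `f⁽q⁾` `α`-Hölder with coefficient `lam`, there is a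
choice of grid coefficients `b a i ∈ {−B + j δy : 0 ≤ j ≤ 2B/δy}` such that on each
interval `I_a = [(a−1)δx, aδx)` (indexed by `a(x) = ⌊x/δx⌋`, with center `x_a`) the clipped
polynomial `[Σ_{i≤q} (b a i / i!)(x − x_a)^i]_B` is within `γ` of `f` in sup norm. -/
theorem holder_clipped_polynomial_net
    (q : ℕ) (α B lam γ β δx δy : ℝ) (hα : α ∈ Set.Ioc (0 : ℝ) 1)
    (hβ : β = q + α) (hβhalf : (1 : ℝ) / 2 ≤ β)
    (hB : 0 < B) (hlam : 0 < lam) (hγ : 0 < γ)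
    (hδx : δx = 2 * ((Nat.factorial q) * γ / (2 * lam)) ^ (1 / β))
    (hδy : δy = γ / Real.exp 1)
    (A J : ℕ) (hA : (A : ℝ) * δx = 1) (hJ : (J : ℝ) * δy = 2 * B)
    (f : ℝ → ℝ) (hf : ContDiff ℝ q f)
    (hbound : ∀ i ≤ q, ∀ x ∈ Set.Icc (0 : ℝ) 1, |iteratedDeriv i f x| ≤ B)
    (hholder : ∀ x ∈ Set.Icc (0 : ℝ) 1, ∀ y ∈ Set.Icc (0 : ℝ) 1,
      |iteratedDeriv q f x - iteratedDeriv q f y| ≤ lam * |x - y| ^ α) :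
    ∃ b : ℕ → ℕ → ℝ,
      (∀ a : ℕ, ∀ i ≤ q, ∃ j : ℕ, j ≤ J ∧ b a i = -B + j * δy) ∧
      ∀ x ∈ Set.Icc (0 : ℝ) 1,
        |f x - max (-B) (min B (∑ i ∈ Finset.range (q + 1),
            b ⌊x / δx⌋₊ i / (Nat.factorial i) *
              (x - ((⌊x / δx⌋₊ : ℝ) + 1 / 2) * δx) ^ i))| ≤ γ := by
  obtain ⟨hα0, hα1⟩ := hα
  have hβ0 : β ≠ 0 := by linarith
  have hqfac : (0:ℝ) < Nat.factorial q := by positivity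
  have hM : (0:ℝ) < (Nat.factorial q) * γ / (2 * lam) := by positivity
  have hδx0 : 0 < δx := by
    rw [hδx]; positivity
  have hδy0 : 0 < δy := by rw [hδy]; positivity
  have hA1 : 1 ≤ A := by
    rcases Nat.eq_zero_or_pos A with h | h
    · exfalso; rw [h] at hA; norm_num at hA
    · exact h
  have hδx1 : δx ≤ 1 := by
    have : (1:ℝ) ≤ A := by exact_mod_cast hA1
    nlinarith
  -- centers
  set c : ℕ → ℝ := fun a => ((a : ℝ) + 1/2) * δx with hc
  have hcmem : ∀ a < A, c a ∈ Set.Icc (0:ℝ) 1 := by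
    intro a haA
    have h1 : (a : ℝ) + 1 ≤ A := by exact_mod_cast haA
    have h2 : ((A : ℝ) - 1/2) * δx = 1 - δx/2 := by rw [sub_mul, hA]; ring
    simp only [hc]
    constructor
    · positivity
    · nlinarith
  -- target values
  set v : ℕ → ℕ → ℝ := fun a i =>
    if a < A ∧ i ≤ q then iteratedDeriv i f (c a) else if i = 0 ∧ a = A then f 1 else 0 with hv
  have hf1B : |f 1| ≤ B := by
    have := hbound 0 (Nat.zero_le q) 1 (by norm_num)
    rwa [iteratedDeriv_zero] at this
  have hvmem : ∀ a i, -B ≤ v a i ∧ v a i ≤ B := by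
    intro a i
    simp only [hv]
    split_ifs with h1 h2
    · have := hbound i h1.2 (c a) (hcmem a h1.1)
      exact abs_le.mp this
    · exact abs_le.mp hf1B
    · constructor <;> linarith
  have H : ∀ a i : ℕ, ∃ j : ℕ, j ≤ J ∧ |(-B + (j : ℝ) * δy) - v a i| ≤ δy / 2 :=
    fun a i => grid_round B δy J hδy0 hJ (v a i) (hvmem a i).1 (hvmem a i).2
  choose jf hjf1 hjf2 using H
  refine ⟨fun a i => -B + (jf a i : ℝ) * δy, fun a i _ => ⟨jf a i, hjf1 a i, rfl⟩, ?_⟩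
  intro x hx
  simp only []
  set a := ⌊x / δx⌋₊ with ha
  have hfl1 : (a : ℝ) * δx ≤ x := by
    have h1 : (a : ℝ) ≤ x / δx := Nat.floor_le (div_nonneg hx.1 hδx0.le)
    calc (a : ℝ) * δx ≤ (x / δx) * δx := by nlinarith
      _ = x := div_mul_cancel₀ _ hδx0.ne'
  have hfl2 : x < ((a : ℝ) + 1) * δx := by
    have h1 : x / δx < (a : ℝ) + 1 := Nat.lt_floor_add_one _
    calc x = (x / δx) * δx := (div_mul_cancel₀ _ hδx0.ne').symm
      _ < ((a : ℝ) + 1) * δx := by nlinarith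
  have hceq : c a = (a : ℝ) * δx + δx / 2 := by simp only [hc]; ring
  have he2 : ((a : ℝ) + 1) * δx = (a : ℝ) * δx + δx := by ring
  have hdist : |x - c a| ≤ δx / 2 := by
    rw [abs_le, hceq]
    constructor <;> linarith
  -- grid sum bound
  set T : ℝ := ∑ i ∈ Finset.range (q + 1), v a i * (x - c a) ^ i / (Nat.factorial i) with hT
  set P : ℝ := ∑ i ∈ Finset.range (q + 1),
      (-B + (jf a i : ℝ) * δy) / (Nat.factorial i) * (x - c a) ^ i with hP
  have hexphalf : Real.exp (δx / 2) ≤ Real.exp 1 := Real.exp_le_exp.mpr (by linarith)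
  have hsumgrid : |T - P| ≤ γ / 2 := by
    have step1 : |T - P| ≤ ∑ i ∈ Finset.range (q + 1), (δy / 2) * ((δx / 2) ^ i / Nat.factorial i) := by
      rw [hT, hP, ← Finset.sum_sub_distrib]
      refine (Finset.abs_sum_le_sum_abs _ _).trans (Finset.sum_le_sum fun i _ => ?_)
      have he : v a i * (x - c a) ^ i / (Nat.factorial i)
          - (-B + (jf a i : ℝ) * δy) / (Nat.factorial i) * (x - c a) ^ i
          = (v a i - (-B + (jf a i : ℝ) * δy)) * (x - c a) ^ i / (Nat.factorial i) := by
        ring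
      rw [he, abs_div, abs_mul, abs_pow]
      have h1 : |v a i - (-B + (jf a i : ℝ) * δy)| ≤ δy / 2 := by
        rw [abs_sub_comm]; exact hjf2 a i
      have h2 : |x - c a| ^ i ≤ (δx / 2) ^ i :=
        pow_le_pow_left₀ (abs_nonneg _) hdist i
      have h3 : |(Nat.factorial i : ℝ)| = Nat.factorial i := abs_of_pos (by positivity)
      rw [h3]
      rw [div_le_iff₀ (by positivity : (0:ℝ) < (Nat.factorial i : ℝ))]
      have : (δy / 2) * ((δx / 2) ^ i / Nat.factorial i) * Nat.factorial i
          = (δy / 2) * (δx / 2) ^ i := by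
        field_simp
      rw [this]
      exact mul_le_mul h1 h2 (pow_nonneg (abs_nonneg _) i) (by linarith)
    have step2 : ∑ i ∈ Finset.range (q + 1), (δy / 2) * ((δx / 2) ^ i / Nat.factorial i)
        = (δy / 2) * ∑ i ∈ Finset.range (q + 1), (δx / 2) ^ i / Nat.factorial i := by
      rw [Finset.mul_sum]
    have step3 : ∑ i ∈ Finset.range (q + 1), (δx / 2) ^ i / (Nat.factorial i : ℝ)
        ≤ Real.exp (δx / 2) := Real.sum_le_exp_of_nonneg (by linarith) _
    have step4 : (δy / 2) * Real.exp (δx / 2) ≤ γ / 2 := by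
      have h := Real.exp_pos 1
      have h2 : δy * Real.exp (δx / 2) ≤ γ := by
        rw [hδy]
        calc γ / Real.exp 1 * Real.exp (δx / 2) = γ * Real.exp (δx / 2) / Real.exp 1 := by ring
          _ ≤ γ * Real.exp 1 / Real.exp 1 := by gcongr
          _ = γ := by field_simp
      linarith
    calc |T - P| ≤ ∑ i ∈ Finset.range (q + 1), (δy / 2) * ((δx / 2) ^ i / Nat.factorial i) := step1
      _ = (δy / 2) * ∑ i ∈ Finset.range (q + 1), (δx / 2) ^ i / Nat.factorial i := step2
      _ ≤ (δy / 2) * Real.exp (δx / 2) := by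
          refine mul_le_mul_of_nonneg_left step3 (by linarith)
      _ ≤ γ / 2 := step4
  -- Taylor bound
  have htay : |f x - T| ≤ γ / 2 := by
    rcases eq_or_lt_of_le hx.2 with h1 | h1
    · -- x = 1
      have hxδ : x / δx = (A : ℝ) := by
        rw [h1, eq_comm, eq_div_iff hδx0.ne']; exact hA
      have haA : a = A := by rw [ha, hxδ, Nat.floor_natCast]
      have hTf : T = f 1 := by
        rw [hT, Finset.sum_eq_single 0]
        · simp [hv, haA, lt_irrefl]
        · intro i _ h0
          simp [hv, haA, h0, lt_irrefl]
        · intro h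
          exact absurd (Finset.mem_range.mpr (Nat.succ_pos q)) h
      rw [hTf, ← h1, sub_self, abs_zero]
      linarith
    · -- x < 1
      have haA : a < A := by
        have h2 : (a : ℝ) * δx < 1 := lt_of_le_of_lt hfl1 h1
        by_contra hcon
        push_neg at hcon
        have h4 : (A : ℝ) ≤ a := by exact_mod_cast hcon
        have h5 : (A : ℝ) * δx ≤ (a : ℝ) * δx := mul_le_mul_of_nonneg_right h4 hδx0.le
        linarith
      have hxa : c a ∈ Set.Icc (0:ℝ) 1 := hcmem a haA
      have hsub : Set.uIcc (c a) x ⊆ Set.Icc (0:ℝ) 1 := by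
        rw [Set.uIcc_eq_union]
        refine Set.union_subset (Set.Icc_subset_Icc hxa.1 hx.2) (Set.Icc_subset_Icc hx.1 hxa.2)
      have hH : ∀ t ∈ Set.uIcc (c a) x,
          |iteratedDeriv q f t - iteratedDeriv q f (c a)| ≤ lam * |t - c a| ^ α :=
        fun t ht => hholder t (hsub ht) (c a) hxa
      have key := taylor_holder α lam hα0 hlam.le q f hf (c a) x hH
      have hTeq : T = ∑ i ∈ Finset.range (q + 1),
          iteratedDeriv i f (c a) * (x - c a) ^ i / (Nat.factorial i) := by
        rw [hT]
        refine Finset.sum_congr rfl fun i hi => ?_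
        have hiq : i ≤ q := Nat.lt_succ_iff.mp (Finset.mem_range.mp hi)
        simp only [hv]
        rw [if_pos (show a < A ∧ i ≤ q from ⟨haA, hiq⟩)]
      rw [hTeq]
      refine key.trans ?_
      have hpow : |x - c a| ^ ((q : ℝ) + α) ≤ (δx / 2) ^ ((q : ℝ) + α) :=
        Real.rpow_le_rpow (abs_nonneg _) hdist (by positivity)
      have hδM : δx / 2 = ((Nat.factorial q) * γ / (2 * lam)) ^ (1 / β) := by
        rw [hδx]; ring
      have hval : (δx / 2) ^ ((q : ℝ) + α) = (Nat.factorial q) * γ / (2 * lam) := by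
        rw [hδM, ← hβ, ← Real.rpow_mul hM.le, one_div, inv_mul_cancel₀ hβ0, Real.rpow_one]
      have : lam * |x - c a| ^ ((q : ℝ) + α) / (Nat.factorial q)
          ≤ lam * ((Nat.factorial q) * γ / (2 * lam)) / (Nat.factorial q) := by
        rw [← hval]
        gcongr
      refine this.trans ?_
      have heq : lam * ((Nat.factorial q : ℝ) * γ / (2 * lam)) / (Nat.factorial q) = γ / 2 := by
        field_simp
      rw [heq]
  -- final assembly
  have hfxB : -B ≤ f x ∧ f x ≤ B := by
    have := hbound 0 (Nat.zero_le q) x hx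
    rw [iteratedDeriv_zero] at this
    exact abs_le.mp this
  have hshow : |f x - max (-B) (min B P)| ≤ γ := by
    calc |f x - max (-B) (min B P)| ≤ |f x - P| := clip_abs _ _ _ hfxB.1 hfxB.2
      _ = |(f x - T) + (T - P)| := by ring_nf
      _ ≤ |f x - T| + |T - P| := abs_add_le _ _
      _ ≤ γ / 2 + γ / 2 := add_le_add htay hsumgrid
      _ = γ := by ring
  show |f x - max (-B) (min B (∑ i ∈ Finset.range (q + 1),
      (-B + (jf a i : ℝ) * δy) / (Nat.factorial i) * (x - c a) ^ i))| ≤ γ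
  exact hshow
end

section
/- Let s ≤ d be positive integers, φ₁,…,φ_d : X → [−B,B], and F = {Σ_{j=1}^d u_j φ_j : u ∈ Δ_d, ‖u‖₀ = s} the set of s-sparse convex combinations. If the metric entropy satisfies log N_∞(F, ε) ≤ c (log C(d,s) + s log(1 + 1/(ε√s))) for a constant c, then plugging γ = 1/√T into the Dudley-type regret bound Reg_T ≤ c₁B²(1 + log N_∞(F,γ)) + c₂B√T ∫₀^γ √(log N_∞(F,ε)) dε gives Reg_T = O(s log(1 + dT/s)) up to constants depending on B. -/
open Real MeasureTheory Set

private lemma sqrt_le_one_add (x : ℝ) (hx : 0 ≤ x) : Real.sqrt x ≤ 1 + x := by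
  have h : x ≤ (1 + x) ^ 2 := by nlinarith
  calc Real.sqrt x ≤ Real.sqrt ((1 + x) ^ 2) := Real.sqrt_le_sqrt h
    _ = 1 + x := Real.sqrt_sq (by linarith)

private lemma log_factorial_ge (s : ℕ) (hs : 0 < s) :
    (s : ℝ) * Real.log s - s ≤ Real.log (s.factorial) := by
  have hsp : (0:ℝ) < s := by exact_mod_cast hs
  have hfp : (0:ℝ) < (s.factorial : ℝ) := by exact_mod_cast s.factorial_pos
  have h1 : (s:ℝ) ^ s / (s.factorial : ℝ) ≤ Real.exp s := by
    have h2 := Real.sum_le_exp_of_nonneg (le_of_lt hsp) (s + 1)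
    refine le_trans ?_ h2
    have := Finset.single_le_sum (f := fun i => (s:ℝ) ^ i / (i.factorial : ℝ))
      (fun i _ => by positivity) (Finset.self_mem_range_succ s)
    simpa using this
  have h3 : (s:ℝ) ^ s ≤ (s.factorial : ℝ) * Real.exp s := by
    rw [div_le_iff₀ hfp] at h1; linarith [h1]
  have h4 : Real.log ((s:ℝ) ^ s) ≤ Real.log ((s.factorial : ℝ) * Real.exp s) :=
    Real.log_le_log (by positivity) h3
  rw [Real.log_pow, Real.log_mul (ne_of_gt hfp) (Real.exp_pos _).ne', Real.log_exp] at h4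
  linarith [h4]

set_option maxHeartbeats 4000000 in
/-- Sparse high-dimensional online regression via the Dudley-type bound. If the metric
entropy of the class of `s`-sparse convex combinations of `d` features satisfies
`log N(ε) ≤ c (log C(d,s) + s log(1 + 1/(ε√s)))`, then plugging `γ = 1/√T` into the
Dudley-type regret bound `c₁B²(1 + log N(γ)) + c₂B√T ∫_0^γ √(log N ε) dε` yields a bound
`≤ c' s log(1 + dT/s)` with a constant `c'` depending only on `B, c, c₁, c₂`. -/
theorem sparse_regression_dudley_bound
    (B c c₁ c₂ : ℝ) (hB : 0 < B) (hc : 0 < c) (hc₁ : 0 < c₁) (hc₂ : 0 < c₂) :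
    ∃ c' : ℝ, 0 < c' ∧ ∀ (d s T : ℕ), 0 < s → s ≤ d → 1 ≤ T →
      ∀ N : ℝ → ℝ, (∀ ε > 0, 1 ≤ N ε) →
      (∀ ε > 0, Real.log (N ε)
          ≤ c * (Real.log (d.choose s) + s * Real.log (1 + 1 / (ε * Real.sqrt s)))) →
      c₁ * B ^ 2 * (1 + Real.log (N (1 / Real.sqrt T)))
          + c₂ * B * Real.sqrt T *
            ∫ ε in Set.Ioc 0 (1 / Real.sqrt T), Real.sqrt (Real.log (N ε))
        ≤ c' * s * Real.log (1 + d * T / s) := by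
  refine ⟨c₁ * B ^ 2 * (2 + 4 * c) + c₂ * B * (2 + 14 * c) + 1, by positivity, ?_⟩
  intro d s T hs hsd hT N hN hNent
  set γ : ℝ := 1 / Real.sqrt T with hγdef
  have hT1 : (1:ℝ) ≤ (T:ℝ) := by exact_mod_cast hT
  have hTpos : (0:ℝ) < T := by linarith
  have hs1 : (1:ℝ) ≤ (s:ℝ) := by exact_mod_cast hs
  have hspos : (0:ℝ) < s := by linarith
  have hsd' : (s:ℝ) ≤ (d:ℝ) := by exact_mod_cast hsd
  have hd1 : (1:ℝ) ≤ (d:ℝ) := le_trans hs1 hsd'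
  have hsqT1 : 1 ≤ Real.sqrt T := by
    rw [show (1:ℝ) = Real.sqrt 1 by simp]; exact Real.sqrt_le_sqrt hT1
  have hsqTpos : 0 < Real.sqrt T := lt_of_lt_of_le one_pos hsqT1
  have hγpos : 0 < γ := by rw [hγdef]; positivity
  have hγle1 : γ ≤ 1 := by
    rw [hγdef, div_le_one hsqTpos]; exact hsqT1
  have hγT : Real.sqrt T * γ = 1 := by
    rw [hγdef]; field_simp
  set L := Real.log (1 + (d:ℝ) * T / s) with hLdef
  have hdTs1 : (1:ℝ) ≤ (d:ℝ) * T / s := by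
    rw [le_div_iff₀ hspos]; nlinarith
  have hL2 : Real.log 2 ≤ L := by
    apply Real.log_le_log (by norm_num); linarith
  have hLhalf : (1:ℝ) / 2 ≤ L := le_trans (by linarith [Real.log_two_gt_d9]) hL2
  have hLpos : 0 < L := lt_of_lt_of_le (by norm_num) hLhalf
  have h1le2L : (1:ℝ) ≤ 2 * L := by linarith
  have hlogTL : Real.log T ≤ L := by
    apply Real.log_le_log hTpos
    have : (T:ℝ) ≤ (d:ℝ) * T / s := by
      rw [le_div_iff₀ hspos]; nlinarith
    linarith
  -- bound on A = log choose
  set A := Real.log (d.choose s) with hAdef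
  have hA : A ≤ 3 * (s * L) := by
    have hch : ((d.choose s : ℕ) : ℝ) ≤ (d:ℝ) ^ s / (s.factorial : ℝ) := by
      exact_mod_cast Nat.choose_le_pow_div s d
    have hchpos : (0:ℝ) < ((d.choose s : ℕ) : ℝ) := by
      exact_mod_cast Nat.choose_pos hsd
    have hfp : (0:ℝ) < (s.factorial : ℝ) := by exact_mod_cast s.factorial_pos
    have h1 : A ≤ Real.log ((d:ℝ) ^ s / (s.factorial : ℝ)) :=
      Real.log_le_log hchpos hch
    rw [Real.log_div (by positivity) (ne_of_gt hfp), Real.log_pow] at h1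
    have h2 := log_factorial_ge s hs
    have h3 : Real.log d - Real.log s ≤ L := by
      rw [← Real.log_div (by positivity) (ne_of_gt hspos)]
      apply Real.log_le_log (by positivity)
      have h4 : (d:ℝ) / s ≤ (d:ℝ) * T / s := by gcongr; nlinarith
      linarith
    have h3' : (s:ℝ) * Real.log d - s * Real.log s ≤ s * L := by
      have := mul_le_mul_of_nonneg_left h3 (le_of_lt hspos)
      rw [mul_sub] at this; exact this
    have hs2L : (s:ℝ) ≤ 2 * (s * L) := by
      have := mul_le_mul_of_nonneg_left h1le2L (le_of_lt hspos)
      rw [mul_one] at this; linarith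
    linarith [h1, h2, h3', hs2L]
  -- bound on log N γ
  have hNγ : Real.log (N γ) ≤ 4 * c * (s * L) := by
    have h1 := hNent γ hγpos
    have hsq_s1 : 1 ≤ Real.sqrt s := by
      rw [show (1:ℝ) = Real.sqrt 1 by simp]; exact Real.sqrt_le_sqrt hs1
    have h2 : 1 / (γ * Real.sqrt s) ≤ (T:ℝ) := by
      have hγs : γ ≤ γ * Real.sqrt s := by nlinarith
      have : 1 / (γ * Real.sqrt s) ≤ 1 / γ := by
        apply one_div_le_one_div_of_le hγpos hγs
      rw [hγdef, one_div_one_div] at this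
      have hsqTleT : Real.sqrt T ≤ (T:ℝ) := by
        nlinarith [Real.sq_sqrt (le_of_lt hTpos), hsqT1, Real.sqrt_nonneg (T:ℝ)]
      linarith
    have h3 : Real.log (1 + 1 / (γ * Real.sqrt s)) ≤ L := by
      apply Real.log_le_log (by positivity)
      have : (T:ℝ) ≤ (d:ℝ) * T / s := by rw [le_div_iff₀ hspos]; nlinarith
      linarith
    have h4 : (s:ℝ) * Real.log (1 + 1 / (γ * Real.sqrt s)) ≤ s * L := by
      apply mul_le_mul_of_nonneg_left h3 (le_of_lt hspos)
    calc Real.log (N γ) ≤ c * (A + s * Real.log (1 + 1 / (γ * Real.sqrt s))) := h1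
      _ ≤ c * (3 * (s * L) + s * L) := by
          apply mul_le_mul_of_nonneg_left _ (le_of_lt hc)
          linarith
      _ = 4 * c * (s * L) := by ring
  -- the dominating function on (0, γ]
  set K : ℝ := 1 + c * A + c * s + c * s * Real.log (Real.sqrt T) with hKdef
  set M : ℝ := 2 * c * s * Real.sqrt γ with hMdef
  have hApos : 0 ≤ A := Real.log_nonneg (by exact_mod_cast Nat.succ_le_of_lt (Nat.choose_pos hsd))
  have hlogsqT : 0 ≤ Real.log (Real.sqrt T) := Real.log_nonneg hsqT1
  have hKpos : 0 < K := by positivity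
  -- pointwise bound
  have hpt : ∀ ε ∈ Set.Ioc (0:ℝ) γ,
      Real.sqrt (Real.log (N ε)) ≤ K + M * ε ^ (-(1/2) : ℝ) := by
    intro ε hε
    obtain ⟨hε0, hεγ⟩ := hε
    have hNε := hN ε hε0
    have hlogN0 : 0 ≤ Real.log (N ε) := Real.log_nonneg hNε
    have h1 : Real.sqrt (Real.log (N ε)) ≤ 1 + Real.log (N ε) :=
      sqrt_le_one_add _ hlogN0
    have h2 := hNent ε hε0
    have hsq_s1 : 1 ≤ Real.sqrt s := by
      rw [show (1:ℝ) = Real.sqrt 1 by simp]; exact Real.sqrt_le_sqrt hs1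
    -- log(1 + 1/(ε √s)) ≤ 1 - log ε
    have h3 : Real.log (1 + 1 / (ε * Real.sqrt s)) ≤ 1 - Real.log ε := by
      have hεs : ε ≤ ε * Real.sqrt s := by nlinarith
      have ha : 1 + 1 / (ε * Real.sqrt s) ≤ 1 + 1 / ε := by
        have := one_div_le_one_div_of_le hε0 hεs
        linarith
      have hb : Real.log (1 + 1 / (ε * Real.sqrt s)) ≤ Real.log ((ε + 1) / ε) := by
        apply Real.log_le_log (by positivity)
        rw [add_div, div_self (ne_of_gt hε0)]
        linarith
      rw [Real.log_div (by positivity) (ne_of_gt hε0)] at hb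
      have hc' : Real.log (ε + 1) ≤ ε := by
        have := Real.log_le_sub_one_of_pos (x := ε + 1) (by linarith)
        linarith
      have hεle1 : ε ≤ 1 := le_trans hεγ hγle1
      linarith
    -- -log ε ≤ log √T + 2 √γ ε^(-1/2)
    have h4 : -Real.log ε ≤ Real.log (Real.sqrt T) + 2 * Real.sqrt γ * ε ^ (-(1/2) : ℝ) := by
      have hlogdiv : Real.log γ - Real.log ε = Real.log (γ / ε) :=
        (Real.log_div (ne_of_gt hγpos) (ne_of_gt hε0)).symm
      have hγε : 0 < γ / ε := by positivity
      have hsq : Real.log (γ / ε) = 2 * Real.log (Real.sqrt (γ / ε)) := by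
        rw [Real.log_sqrt (le_of_lt hγε)]; ring
      have h5 : Real.log (Real.sqrt (γ / ε)) ≤ Real.sqrt (γ / ε) - 1 :=
        Real.log_le_sub_one_of_pos (Real.sqrt_pos.mpr hγε)
      have h6 : Real.sqrt (γ / ε) = Real.sqrt γ * ε ^ (-(1/2) : ℝ) := by
        rw [Real.sqrt_div (le_of_lt hγpos) ε, Real.rpow_neg (le_of_lt hε0),
          ← Real.sqrt_eq_rpow, div_eq_mul_inv]
      have hlogγ : Real.log γ = -Real.log (Real.sqrt T) := by
        rw [hγdef, one_div, Real.log_inv]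
      have : -Real.log ε = -Real.log γ + Real.log (γ / ε) := by
        rw [← hlogdiv]; ring
      rw [this, hlogγ, neg_neg]
      have h7 : Real.log (γ / ε) ≤ 2 * Real.sqrt γ * ε ^ (-(1/2) : ℝ) := by
        rw [hsq]
        have := h5
        rw [h6] at this
        nlinarith [this]
      linarith
    have hrpow_nn : (0:ℝ) ≤ ε ^ (-(1/2) : ℝ) := Real.rpow_nonneg (le_of_lt hε0) _
    have hcs : (0:ℝ) < c * s := by positivity
    calc Real.sqrt (Real.log (N ε)) ≤ 1 + Real.log (N ε) := h1
      _ ≤ 1 + c * (A + s * Real.log (1 + 1 / (ε * Real.sqrt s))) := by linarith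
      _ ≤ 1 + c * A + c * s * (1 - Real.log ε) := by nlinarith [h3]
      _ = 1 + c * A + c * s + c * s * (-Real.log ε) := by ring
      _ ≤ 1 + c * A + c * s
          + c * s * (Real.log (Real.sqrt T) + 2 * Real.sqrt γ * ε ^ (-(1/2) : ℝ)) := by
          nlinarith [h4]
      _ = K + M * ε ^ (-(1/2) : ℝ) := by rw [hKdef, hMdef]; ring
  -- integrability and integral of the dominating function
  have hrpow_int : IntegrableOn (fun ε : ℝ => ε ^ (-(1/2) : ℝ)) (Set.Ioc 0 γ) volume := by
    have := intervalIntegral.intervalIntegrable_rpow' (a := 0) (b := γ)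
      (r := -(1/2)) (by norm_num)
    rwa [intervalIntegrable_iff_integrableOn_Ioc_of_le (le_of_lt hγpos)] at this
  have hg_int : IntegrableOn (fun ε : ℝ => K + M * ε ^ (-(1/2) : ℝ)) (Set.Ioc 0 γ) volume := by
    apply Integrable.add
    · exact integrableOn_const (C := K) measure_Ioc_lt_top.ne
    · exact hrpow_int.const_mul M
  have hrpow_val : ∫ ε in Set.Ioc (0:ℝ) γ, ε ^ (-(1/2) : ℝ) = 2 * Real.sqrt γ := by
    rw [← intervalIntegral.integral_of_le (le_of_lt hγpos)]
    rw [integral_rpow (Or.inl (by norm_num))]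
    rw [Real.zero_rpow (by norm_num)]
    rw [show (-(1/2) : ℝ) + 1 = 1/2 by norm_num, ← Real.sqrt_eq_rpow]
    ring
  have hg_val : ∫ ε in Set.Ioc (0:ℝ) γ, (K + M * ε ^ (-(1/2) : ℝ))
      = γ * K + M * (2 * Real.sqrt γ) := by
    rw [integral_add (integrableOn_const (C := K) measure_Ioc_lt_top.ne)
      (hrpow_int.const_mul M)]
    rw [MeasureTheory.integral_const_mul, hrpow_val, setIntegral_const]
    simp [Real.volume_Ioc, ENNReal.toReal_ofReal (le_of_lt hγpos), smul_eq_mul, le_of_lt hγpos]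
  -- bound the integral term
  have hsqγγ : Real.sqrt γ * Real.sqrt γ = γ := Real.mul_self_sqrt (le_of_lt hγpos)
  have hIbound : Real.sqrt T * ∫ ε in Set.Ioc (0:ℝ) γ, Real.sqrt (Real.log (N ε))
      ≤ (2 + 14 * c) * (s * L) := by
    have hKM : Real.sqrt T * (γ * K + M * (2 * Real.sqrt γ)) ≤ (2 + 14 * c) * (s * L) := by
      have e1 : Real.sqrt T * (γ * K) = K := by
        rw [← mul_assoc, hγT, one_mul]
      have e2 : Real.sqrt T * (M * (2 * Real.sqrt γ)) = 4 * c * s := by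
        rw [hMdef]
        have h36 : (2 * c * ↑s * Real.sqrt γ) * (2 * Real.sqrt γ) = 4 * c * ↑s * γ := by
          rw [show (2 * c * ↑s * Real.sqrt γ) * (2 * Real.sqrt γ)
            = 4 * c * ↑s * (Real.sqrt γ * Real.sqrt γ) by ring, hsqγγ]
        calc Real.sqrt T * (2 * c * ↑s * Real.sqrt γ * (2 * Real.sqrt γ))
            = Real.sqrt T * (4 * c * ↑s * γ) := by rw [h36]
          _ = 4 * c * ↑s * (Real.sqrt T * γ) := by ring
          _ = 4 * c * ↑s := by rw [hγT]; ring
      have hsL1 : (1:ℝ) ≤ 2 * ((s:ℝ) * L) := by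
        have := mul_le_mul hs1 hLhalf (by norm_num) (le_of_lt hspos)
        nlinarith [this]
      have hs2L : (s:ℝ) ≤ 2 * ((s:ℝ) * L) := by
        have := mul_le_mul_of_nonneg_left h1le2L (le_of_lt hspos)
        rw [mul_one] at this; linarith
      have hK_bound : K + 4 * c * (s:ℝ) ≤ (2 + 14 * c) * (s * L) := by
        have b2 : c * A ≤ c * (3 * ((s:ℝ) * L)) :=
          mul_le_mul_of_nonneg_left hA (le_of_lt hc)
        have b3 : c * (s:ℝ) ≤ c * (2 * ((s:ℝ) * L)) :=
          mul_le_mul_of_nonneg_left hs2L (le_of_lt hc)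
        have b4 : c * s * Real.log (Real.sqrt T) ≤ c * ((s:ℝ) * L) := by
          have hsqTleT : Real.sqrt T ≤ (T:ℝ) := by
            nlinarith [Real.sq_sqrt (le_of_lt hTpos), hsqT1, Real.sqrt_nonneg (T:ℝ)]
          have hlg : Real.log (Real.sqrt T) ≤ L :=
            le_trans (Real.log_le_log hsqTpos hsqTleT) hlogTL
          calc c * s * Real.log (Real.sqrt T) ≤ c * s * L := by
                apply mul_le_mul_of_nonneg_left hlg (by positivity)
            _ = c * ((s:ℝ) * L) := by ring
        rw [hKdef]; linarith [b2, b3, b4, hsL1, hs2L]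
      calc Real.sqrt T * (γ * K + M * (2 * Real.sqrt γ))
          = K + 4 * c * (s:ℝ) := by rw [mul_add, e1, e2]
        _ ≤ (2 + 14 * c) * (s * L) := hK_bound
    by_cases hfint : IntegrableOn (fun ε : ℝ => Real.sqrt (Real.log (N ε))) (Set.Ioc 0 γ) volume
    · have hmono : ∫ ε in Set.Ioc (0:ℝ) γ, Real.sqrt (Real.log (N ε))
          ≤ ∫ ε in Set.Ioc (0:ℝ) γ, (K + M * ε ^ (-(1/2) : ℝ)) :=
        setIntegral_mono_on hfint hg_int measurableSet_Ioc hpt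
      calc Real.sqrt T * ∫ ε in Set.Ioc (0:ℝ) γ, Real.sqrt (Real.log (N ε))
          ≤ Real.sqrt T * ∫ ε in Set.Ioc (0:ℝ) γ, (K + M * ε ^ (-(1/2) : ℝ)) := by
            apply mul_le_mul_of_nonneg_left hmono (le_of_lt hsqTpos)
        _ = Real.sqrt T * (γ * K + M * (2 * Real.sqrt γ)) := by rw [hg_val]
        _ ≤ (2 + 14 * c) * (s * L) := hKM
    · rw [integral_undef hfint]
      have h0 : (0:ℝ) ≤ (2 + 14 * c) * ((s:ℝ) * L) := by positivity
      rw [mul_zero]; linarith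
  -- conclude
  have hsL1 : (1:ℝ) ≤ 2 * ((s:ℝ) * L) := by
    have := mul_le_mul hs1 hLhalf (by norm_num) (le_of_lt hspos)
    nlinarith [this]
  have hterm1 : c₁ * B ^ 2 * (1 + Real.log (N γ))
      ≤ c₁ * B ^ 2 * (2 + 4 * c) * ((s:ℝ) * L) := by
    have h1 : 1 + Real.log (N γ) ≤ (2 + 4 * c) * ((s:ℝ) * L) := by
      have h2 : (2 + 4 * c) * ((s:ℝ) * L) = 2 * ((s:ℝ) * L) + 4 * c * ((s:ℝ) * L) := by ring
      rw [h2]; linarith [hNγ, hsL1]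
    calc c₁ * B ^ 2 * (1 + Real.log (N γ))
        ≤ c₁ * B ^ 2 * ((2 + 4 * c) * ((s:ℝ) * L)) := by
          apply mul_le_mul_of_nonneg_left h1 (by positivity)
      _ = c₁ * B ^ 2 * (2 + 4 * c) * ((s:ℝ) * L) := by ring
  have hterm2 : c₂ * B * Real.sqrt T * ∫ ε in Set.Ioc (0:ℝ) γ, Real.sqrt (Real.log (N ε))
      ≤ c₂ * B * (2 + 14 * c) * ((s:ℝ) * L) := by
    have h := mul_le_mul_of_nonneg_left hIbound (le_of_lt (mul_pos hc₂ hB))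
    calc c₂ * B * Real.sqrt T * ∫ ε in Set.Ioc (0:ℝ) γ, Real.sqrt (Real.log (N ε))
        = c₂ * B * (Real.sqrt T * ∫ ε in Set.Ioc (0:ℝ) γ, Real.sqrt (Real.log (N ε))) := by
          ring
      _ ≤ c₂ * B * ((2 + 14 * c) * ((s:ℝ) * L)) := h
      _ = c₂ * B * (2 + 14 * c) * ((s:ℝ) * L) := by ring
  have hsLnn : (0:ℝ) ≤ (s:ℝ) * L := by positivity
  calc c₁ * B ^ 2 * (1 + Real.log (N γ))
        + c₂ * B * Real.sqrt T * ∫ ε in Set.Ioc (0:ℝ) γ, Real.sqrt (Real.log (N ε))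
      ≤ c₁ * B ^ 2 * (2 + 4 * c) * ((s:ℝ) * L) + c₂ * B * (2 + 14 * c) * ((s:ℝ) * L) := by
        linarith [hterm1, hterm2]
    _ ≤ (c₁ * B ^ 2 * (2 + 4 * c) + c₂ * B * (2 + 14 * c) + 1) * s * L := by
        nlinarith [hsLnn]
end
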